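/- In a network of parallel edges E between s and t, with delay on edge e given by x/c_e(β_e) + b_e where c_e(β) = c_e + μ_e β_e, suppose all edges carry positive flow at equilibrium so that L(β) = (d + Σ_e c_e(β) b_e)/(Σ_e c_e(β)). If edges e, e' satisfy ∂L/∂β_e = ∂L/∂β_{e'} at β (with μ_e ≠ μ_{e'}), then L(β) = (b_e μ_e − b_{e'} μ_{e'})/(μ_e − μ_{e'}), and for any δ ∈ ℝ, the allocation β' obtained by increasing β_e by δ and decreasing β_{e'} by δ (keeping denominators positive) satisfies L(β') = L(β). -/

import Mathlib

theorem stmt_8 {E : Type*} [Fintype E] [DecidableEq E]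
    (c μ b : E → ℝ) (d : ℝ) (hd : 0 < d) (hb : ∀ r, 0 ≤ b r)
    (L : (E → ℝ) → ℝ)
    (hL : ∀ β : E → ℝ,
      L β = (d + ∑ r, (c r + μ r * β r) * b r) / (∑ r, (c r + μ r * β r)))
    (β : E → ℝ) (e e' : E) (hee' : e ≠ e') (hμne : μ e ≠ μ e')
    (hposedge : ∀ r, 0 < c r + μ r * β r)
    (hderiv : -(μ e / (∑ r, (c r + μ r * β r))) * (L β - b e)
            = -(μ e' / (∑ r, (c r + μ r * β r))) * (L β - b e'))
    (δ : ℝ)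
    (β' : E → ℝ)
    (hβ' : β' = Function.update (Function.update β e (β e + δ)) e' (β e' - δ))
    (hposden : 0 < ∑ r, (c r + μ r * β' r)) :
    L β = (b e * μ e - b e' * μ e') / (μ e - μ e') ∧ L β' = L β := by
  set S := ∑ r, (c r + μ r * β r) with hS
  have hSpos : 0 < S := Finset.sum_pos (fun r _ => hposedge r) ⟨e, Finset.mem_univ e⟩
  have hSne : S ≠ 0 := ne_of_gt hSpos
  -- from hderiv: μ e * (L β - b e) = μ e' * (L β - b e')
  have key : μ e * (L β - b e) = μ e' * (L β - b e') := by
    have h := hderiv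
    field_simp at h
    linarith [h]
  have hμsub : μ e - μ e' ≠ 0 := sub_ne_zero.mpr hμne
  have hL1 : L β = (b e * μ e - b e' * μ e') / (μ e - μ e') := by
    field_simp
    nlinarith [key]
  refine ⟨hL1, ?_⟩
  -- values of β'
  have hβ'e : β' e = β e + δ := by
    rw [hβ', Function.update_of_ne hee', Function.update_self]
  have hβ'e' : β' e' = β e' - δ := by
    rw [hβ', Function.update_self]
  have hβ'r : ∀ r, r ≠ e → r ≠ e' → β' r = β r := by
    intro r h1 h2
    rw [hβ', Function.update_of_ne h2, Function.update_of_ne h1]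
  -- sums
  have hsum1 : ∑ r, (c r + μ r * β' r)
      = S + μ e * δ - μ e' * δ := by
    have : ∀ r ∈ Finset.univ, (c r + μ r * β' r)
        = (c r + μ r * β r) + ((if r = e then μ e * δ else 0)
          + (if r = e' then -(μ e' * δ) else 0)) := by
      intro r _
      by_cases h1 : r = e
      · subst h1
        rw [hβ'e, if_pos rfl, if_neg hee']
        ring
      · by_cases h2 : r = e'
        · subst h2
          rw [hβ'e', if_neg h1, if_pos rfl]
          ring
        · rw [hβ'r r h1 h2, if_neg h1, if_neg h2]
          ring
    have h1 : ∑ x, ((if x = e then μ e * δ else 0) + if x = e' then -(μ e' * δ) else 0)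
        = μ e * δ - μ e' * δ := by
      rw [Finset.sum_add_distrib]; simp; ring
    rw [Finset.sum_congr rfl this, Finset.sum_add_distrib, h1, ← hS]; ring
  have hsum2 : ∑ r, (c r + μ r * β' r) * b r
      = (∑ r, (c r + μ r * β r) * b r) + μ e * δ * b e - μ e' * δ * b e' := by
    have : ∀ r ∈ Finset.univ, (c r + μ r * β' r) * b r
        = (c r + μ r * β r) * b r + ((if r = e then μ e * δ * b e else 0)
          + (if r = e' then -(μ e' * δ * b e') else 0)) := by
      intro r _
      by_cases h1 : r = e
      · subst h1
        rw [hβ'e, if_pos rfl, if_neg hee']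
        ring
      · by_cases h2 : r = e'
        · subst h2
          rw [hβ'e', if_neg h1, if_pos rfl]
          ring
        · rw [hβ'r r h1 h2, if_neg h1, if_neg h2]
          ring
    have h1 : ∑ x, ((if x = e then μ e * δ * b e else 0) + if x = e' then -(μ e' * δ * b e') else 0)
        = μ e * δ * b e - μ e' * δ * b e' := by
      rw [Finset.sum_add_distrib]; simp; ring
    rw [Finset.sum_congr rfl this, Finset.sum_add_distrib, h1]; ring
  have hS'ne : S + μ e * δ - μ e' * δ ≠ 0 := by
    rw [← hsum1]; exact ne_of_gt hposden
  set N := ∑ r, (c r + μ r * β r) * b r with hN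
  have hNL : d + N = L β * S := by
    rw [hL β, ← hS, ← hN]
    field_simp
  rw [hL β', hsum1, hsum2]
  rw [div_eq_iff hS'ne]
  have hkey2 : μ e * b e - μ e' * b e' = L β * (μ e - μ e') := by
    nlinarith [key]
  linear_combination hNL + δ * hkey2
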